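/- Fix N∈ℕ and x₁,x₂,y₁,y₂∈ℤ such that Ω(N,(x₁,x₂),(y₁,y₂)) is nonempty. Then for any functions h₁,h₂:{0,…,N}→ℤ, P^{N,(x₁,x₂),(y₁,y₂)}( L₁(j)≥h₁(j) for all j and L₂(j)≤h₂(j) for all j ) ≥ P^{N,x₁,y₁}( L(j)≥h₁(j) for all j ) · P^{N,x₂,y₂}( L(j)≤h₂(j) for all j ). -/

import Mathlib

/-- A Bernoulli path on `{0,…,N}`: increments in `{0,1}`. -/
def IsBPath (N : ℕ) (L : Fin (N+1) → ℤ) : Prop :=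
  ∀ j : Fin N, L j.succ = L j.castSucc ∨ L j.succ = L j.castSucc + 1

/-- `Ω(N,x,y)`: Bernoulli paths from `x` to `y`. -/
def pathSet (N : ℕ) (x y : ℤ) : Set (Fin (N+1) → ℤ) :=
  {L | IsBPath N L ∧ L 0 = x ∧ L (Fin.last N) = y}

/-- `Ω(N,(x₁,x₂),(y₁,y₂))`: pairs of ordered (non-intersecting) Bernoulli paths. -/
def pairSet (N : ℕ) (x₁ x₂ y₁ y₂ : ℤ) : Set ((Fin (N+1) → ℤ) × (Fin (N+1) → ℤ)) :=
  {p | IsBPath N p.1 ∧ IsBPath N p.2 ∧ (∀ j, p.2 j ≤ p.1 j) ∧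
    p.1 0 = x₁ ∧ p.2 0 = x₂ ∧ p.1 (Fin.last N) = y₁ ∧ p.2 (Fin.last N) = y₂}

/-- Probability of the event `A` under the uniform measure on the finite set `Ω`. -/
noncomputable def unifProb {X : Type*} (Ω A : Set X) : ℝ :=
  ((Ω ∩ A).ncard : ℝ) / (Ω.ncard : ℝ)

lemma isBPath_sup {N : ℕ} {L M : Fin (N+1) → ℤ} (hL : IsBPath N L) (hM : IsBPath N M) :
    IsBPath N (L ⊔ M) := by
  intro j
  have h1 := hL j; have h2 := hM j
  simp only [Pi.sup_apply, Int.max_def]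
  split_ifs <;> omega

lemma isBPath_inf {N : ℕ} {L M : Fin (N+1) → ℤ} (hL : IsBPath N L) (hM : IsBPath N M) :
    IsBPath N (L ⊓ M) := by
  intro j
  have h1 := hL j; have h2 := hM j
  simp only [Pi.inf_apply, Int.min_def]
  split_ifs <;> omega

lemma bpath_le {N : ℕ} {L : Fin (N+1) → ℤ} (hL : IsBPath N L) :
    ∀ j : Fin (N+1), L 0 ≤ L j ∧ L j ≤ L 0 + j.val := by
  intro j
  induction j using Fin.induction with
  | zero => simp
  | succ i ih =>
    have h := hL i
    have hs : (i.succ : Fin (N+1)).val = i.val + 1 := rfl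
    rw [hs]
    rw [show ((i.castSucc : Fin (N+1)) : ℕ) = i.val from rfl] at ih
    push_cast
    omega

lemma pathSet_finite (N : ℕ) (x y : ℤ) : (pathSet N x y).Finite := by
  have hsub : pathSet N x y ⊆ Set.pi Set.univ (fun _ : Fin (N+1) => Set.Icc x (x + N)) := by
    rintro L ⟨hB, h0, hN⟩ j _
    have h := bpath_le hB j
    rw [h0] at h
    have hj : (j.val : ℤ) ≤ N := by exact_mod_cast Nat.lt_succ_iff.mp j.isLt
    exact ⟨h.1, h.2.trans (by omega)⟩
  exact (Set.Finite.pi fun _ => Set.finite_Icc _ _).subset hsub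

/-- pointwise sup/inf lemma providing the four-functions hypothesis. -/
lemma key_lemma {N : ℕ} {x₁ x₂ y₁ y₂ : ℤ} {h₁ h₂ : Fin (N+1) → ℤ}
    {L₁ L₂ M₁ M₂ : Fin (N+1) → ℤ}
    (hL : (L₁, L₂) ∈ pairSet N x₁ x₂ y₁ y₂)
    (hM₁ : M₁ ∈ pathSet N x₁ y₁) (hM₁h : ∀ j, h₁ j ≤ M₁ j)
    (hM₂ : M₂ ∈ pathSet N x₂ y₂) (hM₂h : ∀ j, M₂ j ≤ h₂ j) :
    (L₁ ⊓ M₁ ∈ pathSet N x₁ y₁ ∧ L₂ ⊔ M₂ ∈ pathSet N x₂ y₂) ∧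
    (L₁ ⊔ M₁, L₂ ⊓ M₂) ∈ pairSet N x₁ x₂ y₁ y₂ ∩
      {p | (∀ j, h₁ j ≤ p.1 j) ∧ (∀ j, p.2 j ≤ h₂ j)} := by
  obtain ⟨hB1, hB2, hord, h10, h20, h1N, h2N⟩ := hL
  obtain ⟨hBM1, hM10, hM1N⟩ := hM₁
  obtain ⟨hBM2, hM20, hM2N⟩ := hM₂
  simp only [Set.mem_setOf_eq] at *
  refine ⟨⟨⟨isBPath_inf hB1 hBM1, ?_, ?_⟩, ⟨isBPath_sup hB2 hBM2, ?_, ?_⟩⟩,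
    ⟨⟨isBPath_sup hB1 hBM1, isBPath_inf hB2 hBM2, ?_, ?_, ?_, ?_, ?_⟩, ?_, ?_⟩⟩
  · simp [Pi.inf_apply, h10, hM10]
  · simp [Pi.inf_apply, h1N, hM1N]
  · simp [Pi.sup_apply, h20, hM20]
  · simp [Pi.sup_apply, h2N, hM2N]
  · intro j
    exact le_trans (inf_le_left.trans (hord j)) le_sup_left
  · simp [Pi.sup_apply, h10, hM10]
  · simp [Pi.inf_apply, h20, hM20]
  · simp [Pi.sup_apply, h1N, hM1N]
  · simp [Pi.inf_apply, h2N, hM2N]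
  · intro j
    exact (hM₁h j).trans le_sup_right
  · intro j
    exact inf_le_right.trans (hM₂h j)

lemma ncard_sprod {γ δ : Type*} {s : Set γ} {t : Set δ} (hs : s.Finite) (ht : t.Finite) :
    (s ×ˢ t).ncard = s.ncard * t.ncard := by
  rw [Set.ncard_eq_toFinset_card _ (hs.prod ht), Set.ncard_eq_toFinset_card _ hs,
    Set.ncard_eq_toFinset_card _ ht, ← Set.Finite.toFinset_prod, Finset.card_product]

/-- Ahlswede–Daykin for four finite sets in a distributive lattice. -/
lemma ad_sets {γ : Type*} [DistribLattice γ] (S₁ S₂ S₃ S₄ : Set γ)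
    (hS₁ : S₁.Finite) (hS₂ : S₂.Finite) (hS₃ : S₃.Finite) (hS₄ : S₄.Finite)
    (h : ∀ a ∈ S₁, ∀ b ∈ S₂, a ⊓ b ∈ S₃ ∧ a ⊔ b ∈ S₄) :
    (S₁.ncard : ℝ) * S₂.ncard ≤ (S₃.ncard : ℝ) * S₄.ncard := by
  classical
  have hkey : ∀ a b : γ, (if a ∈ S₁ then (1:ℝ) else 0) * (if b ∈ S₂ then (1:ℝ) else 0) ≤
      (if a ⊓ b ∈ S₃ then (1:ℝ) else 0) * (if a ⊔ b ∈ S₄ then (1:ℝ) else 0) := by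
    intro a b
    by_cases ha : a ∈ S₁
    · by_cases hb : b ∈ S₂
      · rw [if_pos ha, if_pos hb, if_pos (h a ha b hb).1, if_pos (h a ha b hb).2]
      · rw [if_neg hb, mul_zero]
        apply mul_nonneg <;> split_ifs <;> norm_num
    · rw [if_neg ha, zero_mul]
      apply mul_nonneg <;> split_ifs <;> norm_num
  have h4 := four_functions_theorem (β := ℝ)
    (fun a => if a ∈ S₁ then 1 else 0) (fun a => if a ∈ S₂ then 1 else 0)
    (fun a => if a ∈ S₃ then 1 else 0) (fun a => if a ∈ S₄ then 1 else 0)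
    (fun a => by dsimp; split_ifs <;> norm_num)
    (fun a => by dsimp; split_ifs <;> norm_num)
    (fun a => by dsimp; split_ifs <;> norm_num)
    (fun a => by dsimp; split_ifs <;> norm_num)
    hkey hS₁.toFinset hS₂.toFinset
  have e₁ : ∑ a ∈ hS₁.toFinset, (if a ∈ S₁ then (1:ℝ) else 0) = S₁.ncard := by
    rw [Set.ncard_eq_toFinset_card _ hS₁]
    rw [Finset.sum_congr rfl (fun a ha => if_pos (hS₁.mem_toFinset.mp ha))]
    simp
  have e₂ : ∑ a ∈ hS₂.toFinset, (if a ∈ S₂ then (1:ℝ) else 0) = S₂.ncard := by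
    rw [Set.ncard_eq_toFinset_card _ hS₂]
    rw [Finset.sum_congr rfl (fun a ha => if_pos (hS₂.mem_toFinset.mp ha))]
    simp
  have e₃ : ∀ u : Finset γ, ∑ a ∈ u, (if a ∈ S₃ then (1:ℝ) else 0) ≤ S₃.ncard := by
    intro u
    rw [Finset.sum_boole, Set.ncard_eq_toFinset_card _ hS₃]
    exact_mod_cast Finset.card_le_card (fun a ha => hS₃.mem_toFinset.mpr
      (Finset.mem_filter.mp ha).2)
  have e₄ : ∀ u : Finset γ, ∑ a ∈ u, (if a ∈ S₄ then (1:ℝ) else 0) ≤ S₄.ncard := by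
    intro u
    rw [Finset.sum_boole, Set.ncard_eq_toFinset_card _ hS₄]
    exact_mod_cast Finset.card_le_card (fun a ha => hS₄.mem_toFinset.mpr
      (Finset.mem_filter.mp ha).2)
  rw [e₁, e₂] at h4
  refine h4.trans (mul_le_mul (e₃ _) (e₄ _) ?_ (Nat.cast_nonneg _))
  · exact Finset.sum_nonneg fun a _ => by split_ifs <;> norm_num

/-- Lemma 3.4: correlation inequality for non-intersecting Bernoulli random walk bridges. -/
theorem stmt13 (N : ℕ) (x₁ x₂ y₁ y₂ : ℤ)
    (hne : (pairSet N x₁ x₂ y₁ y₂).Nonempty)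
    (h₁ h₂ : Fin (N+1) → ℤ) :
    unifProb (pairSet N x₁ x₂ y₁ y₂)
        {p | (∀ j, h₁ j ≤ p.1 j) ∧ (∀ j, p.2 j ≤ h₂ j)} ≥
      unifProb (pathSet N x₁ y₁) {L | ∀ j, h₁ j ≤ L j} *
        unifProb (pathSet N x₂ y₂) {L | ∀ j, L j ≤ h₂ j} := by
  classical
  set Ω := pairSet N x₁ x₂ y₁ y₂ with hΩdef
  set A : Set ((Fin (N+1) → ℤ) × (Fin (N+1) → ℤ)) :=
    {p | (∀ j, h₁ j ≤ p.1 j) ∧ (∀ j, p.2 j ≤ h₂ j)} with hAdef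
  set Ω₁ := pathSet N x₁ y₁ with hΩ₁def
  set Ω₂ := pathSet N x₂ y₂ with hΩ₂def
  set A₁ : Set (Fin (N+1) → ℤ) := {L | ∀ j, h₁ j ≤ L j} with hA₁def
  set A₂ : Set (Fin (N+1) → ℤ) := {L | ∀ j, L j ≤ h₂ j} with hA₂def
  have h1fin : Ω₁.Finite := pathSet_finite N x₁ y₁
  have h2fin : Ω₂.Finite := pathSet_finite N x₂ y₂
  have hmem1 : ∀ p ∈ Ω, p.1 ∈ Ω₁ := fun p hp => ⟨hp.1, hp.2.2.2.1, hp.2.2.2.2.2.1⟩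
  have hmem2 : ∀ p ∈ Ω, p.2 ∈ Ω₂ := fun p hp => ⟨hp.2.1, hp.2.2.2.2.1, hp.2.2.2.2.2.2⟩
  have hΩfin : Ω.Finite := (h1fin.prod h2fin).subset (fun p hp => ⟨hmem1 p hp, hmem2 p hp⟩)
  let e : ((Fin (N+1) → ℤ) × (Fin (N+1) → ℤ)) ≃ ((Fin (N+1) → ℤ) × (Fin (N+1) → ℤ)ᵒᵈ) :=
    (Equiv.refl _).prodCongr OrderDual.toDual
  have hAD := ad_sets (e '' Ω) (e '' ((Ω₁ ∩ A₁) ×ˢ (Ω₂ ∩ A₂))) (e '' (Ω₁ ×ˢ Ω₂)) (e '' (Ω ∩ A))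
    (hΩfin.image e) (((h1fin.inter_of_left A₁).prod (h2fin.inter_of_left A₂)).image e)
    ((h1fin.prod h2fin).image e) ((hΩfin.inter_of_left A).image e) ?_
  · rw [Set.ncard_image_of_injective _ e.injective, Set.ncard_image_of_injective _ e.injective,
      Set.ncard_image_of_injective _ e.injective, Set.ncard_image_of_injective _ e.injective,
      ncard_sprod (h1fin.inter_of_left A₁) (h2fin.inter_of_left A₂), ncard_sprod h1fin h2fin]
      at hAD
    obtain ⟨K, hK⟩ := hne
    have hn : (0:ℝ) < (Ω.ncard : ℝ) := by
      exact_mod_cast (Set.ncard_pos hΩfin).mpr ⟨K, hK⟩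
    have hn1 : (0:ℝ) < (Ω₁.ncard : ℝ) := by
      exact_mod_cast (Set.ncard_pos h1fin).mpr ⟨K.1, hmem1 K hK⟩
    have hn2 : (0:ℝ) < (Ω₂.ncard : ℝ) := by
      exact_mod_cast (Set.ncard_pos h2fin).mpr ⟨K.2, hmem2 K hK⟩
    rw [ge_iff_le, unifProb, unifProb, unifProb, div_mul_div_comm,
      div_le_div_iff₀ (by positivity) hn]
    push_cast at hAD ⊢
    linear_combination hAD
  · rintro a ⟨p, hp, rfl⟩ b ⟨q, hq, rfl⟩
    have hk := key_lemma (L₁ := p.1) (L₂ := p.2) (M₁ := q.1) (M₂ := q.2) hp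
      hq.1.1 hq.1.2 hq.2.1 hq.2.2
    refine ⟨?_, ?_⟩
    · rw [Set.mem_image_equiv]
      exact ⟨hk.1.1, hk.1.2⟩
    · rw [Set.mem_image_equiv]
      exact hk.2
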